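/- Let X : Ω → (∀ i : Fin n, 𝕏 i) be a dataset on a nonempty set Ω and let g : (∀ i, 𝕏 i) → 𝕐 be an m-noiselessly private mechanism with respect to X, where m ≥ 1. Fix i : Fin n and v : ∀ j, 𝕏 j, and let D be any nonempty finite subset of Set.range X_i (the support of a stochastic prior on the data of individual i). Then for the deterministic output channel t ↦ g (Function.update v i t), the exponentiated maximal leakage ∑_{y ∈ (fun t ↦ g (Function.update v i t)) '' D} (sup over t ∈ D of the conditional probability 𝟙[g (Function.update v i t) = y]) equals Nat.card ((fun t ↦ g (Function.update v i t)) '' D) and is at most m; hence the maximal leakage ℒ_c(X_i → Y) = log₂ of this sum is at most log₂ m (the privacy budget ε when m = 2^ε). -/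

import Mathlib

/-- `g` is `m`-noiselessly private w.r.t. the dataset `X`. -/
def NoiselesslyPrivate {Ω : Type*} {n : ℕ} {𝕏 : Fin n → Type*} {𝕐 : Type*}
    (X : Ω → ∀ i, 𝕏 i) (g : (∀ i, 𝕏 i) → 𝕐) (m : ℕ) : Prop :=
  ∀ (i : Fin n) (v : ∀ j, 𝕏 j),
    Nat.card ((fun t => g (Function.update v i t)) '' Set.range (fun ω => X ω i)) ≤ m

/-- for the deterministic channel `t ↦ g (Function.update v i t)` of an
`m`-noiselessly private mechanism and any (support `D` of a) stochastic prior on the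
data of individual `i`, the exponentiated Issa–Wagner maximal leakage
`∑_y max_{t ∈ D} P(Y = y | X_i = t)` equals the number of attainable outputs and is at
most `m`; hence the maximal leakage `log₂` of it is at most the budget `log₂ m`. -/
theorem noiseless_privacy_maximal_leakage {Ω : Type*} [Nonempty Ω] {n : ℕ}
    {𝕏 : Fin n → Type*} {𝕐 : Type*} [DecidableEq 𝕐]
    (X : Ω → ∀ i, 𝕏 i) (hfin : ∀ i, (Set.range (fun ω => X ω i)).Finite)
    (g : (∀ i, 𝕏 i) → 𝕐) (m : ℕ) (hm : 1 ≤ m)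
    (hpriv : NoiselesslyPrivate X g m)
    (i : Fin n) (v : ∀ j, 𝕏 j)
    (D : Finset (𝕏 i)) (hD : D.Nonempty)
    (hDsub : (D : Set (𝕏 i)) ⊆ Set.range (fun ω => X ω i)) :
    (∑ y ∈ D.image (fun t => g (Function.update v i t)),
        D.sup' hD (fun t => if g (Function.update v i t) = y then (1 : ℝ) else 0)) =
      (Nat.card ((fun t => g (Function.update v i t)) '' (D : Set (𝕏 i))) : ℝ) ∧
    Nat.card ((fun t => g (Function.update v i t)) '' (D : Set (𝕏 i))) ≤ m ∧
    Real.logb 2 (∑ y ∈ D.image (fun t => g (Function.update v i t)),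
        D.sup' hD (fun t => if g (Function.update v i t) = y then (1 : ℝ) else 0)) ≤
      Real.logb 2 m := by
  set f : 𝕏 i → 𝕐 := fun t => g (Function.update v i t) with hf
  have himg : f '' (D : Set (𝕏 i)) = ((D.image f : Finset 𝕐) : Set 𝕐) := by
    simp [Finset.coe_image]
  have hcard : Nat.card (f '' (D : Set (𝕏 i))) = (D.image f).card := by
    rw [himg]; simp [Nat.card_eq_finsetCard]
  have hsup : ∀ y ∈ D.image f,
      D.sup' hD (fun t => if f t = y then (1 : ℝ) else 0) = 1 := by
    intro y hy
    obtain ⟨t, ht, hty⟩ := Finset.mem_image.mp hy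
    apply le_antisymm
    · apply Finset.sup'_le
      intro b _
      split <;> norm_num
    · calc (1 : ℝ) = if f t = y then (1:ℝ) else 0 := by simp [hty]
        _ ≤ _ := Finset.le_sup' (fun t => if f t = y then (1:ℝ) else 0) ht
  have hsum : (∑ y ∈ D.image f,
      D.sup' hD (fun t => if f t = y then (1 : ℝ) else 0)) = (Nat.card (f '' (D : Set (𝕏 i))) : ℝ) := by
    rw [Finset.sum_congr rfl hsup, Finset.sum_const, hcard]
    simp
  have hle : Nat.card (f '' (D : Set (𝕏 i))) ≤ m := by
    refine le_trans (Nat.card_mono ((hfin i).image f).to_subtype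
      (Set.image_mono (f := f) hDsub)) (hpriv i v)
  refine ⟨hsum, hle, ?_⟩
  rw [hsum]
  have hpos : 0 < Nat.card (f '' (D : Set (𝕏 i))) := by
    rw [hcard]; exact Finset.card_pos.mpr (hD.image f)
  gcongr
  · norm_num
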